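/- Let d be a positive integer and let γ be the standard Gaussian measure on ℝ^d (the d-fold product of the standard normal distribution on ℝ). Then for all vectors u, v ∈ ℝ^d, ∫ (⟨a, u⟩² − ⟨a, v⟩²)² dγ(a) = 3‖u‖⁴ + 3‖v‖⁴ − 2‖u‖²‖v‖² − 4⟨u, v⟩². In particular, when ‖v‖ = 1 this integral equals 4(‖u‖² − ⟨u, v⟩²) + 3(‖u‖² − 1)². -/

import Mathlib

open MeasureTheory ProbabilityTheory Real
open scoped ENNReal NNReal

lemma gauss_intg (n : ℕ) :
    Integrable (fun x : ℝ => x ^ n * Real.exp (-(2⁻¹ : ℝ) * x ^ 2)) := by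
  have hbase : Integrable (fun x : ℝ => ((n.factorial : ℝ) * Real.exp 1) * Real.exp (-(4⁻¹:ℝ) * x ^ 2)) :=
    (integrable_exp_neg_mul_sq (by norm_num : (0:ℝ) < 4⁻¹)).const_mul _
  refine hbase.mono' ?_ ?_
  · exact ((continuous_pow n).mul
      ((continuous_const.mul (continuous_pow 2)).rexp)).aestronglyMeasurable
  · refine Filter.Eventually.of_forall fun x => ?_
    have h1 : |x| ^ n ≤ (n.factorial : ℝ) * Real.exp |x| := by
      have := Real.pow_div_factorial_le_exp (x := |x|) (abs_nonneg x) n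
      have hn : (0:ℝ) < (n.factorial : ℝ) := by positivity
      calc |x| ^ n = (|x| ^ n / (n.factorial : ℝ)) * (n.factorial : ℝ) := by field_simp
        _ ≤ Real.exp |x| * (n.factorial : ℝ) := by gcongr
        _ = (n.factorial : ℝ) * Real.exp |x| := by ring
    have h2 : Real.exp |x| * Real.exp (-(2⁻¹:ℝ) * x ^ 2)
        ≤ Real.exp 1 * Real.exp (-(4⁻¹:ℝ) * x ^ 2) := by
      rw [← Real.exp_add, ← Real.exp_add]
      apply Real.exp_le_exp.2
      nlinarith [sq_nonneg (|x| - 2), sq_abs x]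
    have hexp : (0:ℝ) < Real.exp (-(2⁻¹:ℝ) * x ^ 2) := Real.exp_pos _
    calc ‖x ^ n * Real.exp (-(2⁻¹:ℝ) * x ^ 2)‖
        = |x| ^ n * Real.exp (-(2⁻¹:ℝ) * x ^ 2) := by
          rw [norm_mul, norm_pow, Real.norm_eq_abs, Real.norm_eq_abs,
            abs_of_pos hexp]
      _ ≤ ((n.factorial : ℝ) * Real.exp |x|) * Real.exp (-(2⁻¹:ℝ) * x ^ 2) := by gcongr
      _ = (n.factorial : ℝ) * (Real.exp |x| * Real.exp (-(2⁻¹:ℝ) * x ^ 2)) := by ring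
      _ ≤ (n.factorial : ℝ) * (Real.exp 1 * Real.exp (-(4⁻¹:ℝ) * x ^ 2)) := by
          have hn : (0:ℝ) ≤ (n.factorial : ℝ) := by positivity
          exact mul_le_mul_of_nonneg_left h2 hn
      _ = ((n.factorial : ℝ) * Real.exp 1) * Real.exp (-(4⁻¹:ℝ) * x ^ 2) := by ring

noncomputable def GI (n : ℕ) : ℝ := ∫ x : ℝ, x ^ n * Real.exp (-(2⁻¹:ℝ) * x ^ 2)

lemma expderiv (x : ℝ) :
    HasDerivAt (fun y : ℝ => Real.exp (-(2⁻¹:ℝ) * y ^ 2))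
      (-x * Real.exp (-(2⁻¹:ℝ) * x ^ 2)) x := by
  have h := ((hasDerivAt_pow 2 x).const_mul (-(2⁻¹:ℝ))).exp
  convert h using 1
  ring

lemma GI_zero : GI 0 = Real.sqrt (2 * π) := by
  have := integral_gaussian 2⁻¹
  simp only [GI, pow_zero, one_mul]
  rw [this]
  norm_num [mul_comm]

lemma GI_one : GI 1 = 0 := by
  have hderiv : ∀ x : ℝ, HasDerivAt (fun y : ℝ => -Real.exp (-(2⁻¹:ℝ) * y ^ 2))
      (x ^ 1 * Real.exp (-(2⁻¹:ℝ) * x ^ 2)) x := by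
    intro x
    have := (expderiv x).neg
    exact this.congr_deriv (by ring)
  exact integral_eq_zero_of_hasDerivAt_of_integrable hderiv (gauss_intg 1)
    ((gauss_intg 0).neg.congr (by filter_upwards with x; simp))

lemma GI_rec (n : ℕ) : GI (n + 2) = (n + 1 : ℝ) * GI n := by
  have hderiv : ∀ x : ℝ, HasDerivAt (fun y : ℝ => y ^ (n+1) * Real.exp (-(2⁻¹:ℝ) * y ^ 2))
      ((n+1:ℝ) * (x ^ n * Real.exp (-(2⁻¹:ℝ) * x ^ 2))
        - x ^ (n+2) * Real.exp (-(2⁻¹:ℝ) * x ^ 2)) x := by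
    intro x
    have := (hasDerivAt_pow (n+1) x).mul (expderiv x)
    exact this.congr_deriv (by push_cast; ring)
  have h0 : (∫ x : ℝ, ((n+1:ℝ) * (x ^ n * Real.exp (-(2⁻¹:ℝ) * x ^ 2))
      - x ^ (n+2) * Real.exp (-(2⁻¹:ℝ) * x ^ 2))) = 0 :=
    integral_eq_zero_of_hasDerivAt_of_integrable hderiv
      (((gauss_intg n).const_mul _).sub (gauss_intg (n+2))) (gauss_intg (n+1))
  rw [integral_sub ((gauss_intg n).const_mul _) (gauss_intg (n+2)),
    integral_const_mul] at h0
  have : GI (n+2) = (∫ x : ℝ, x ^ (n+2) * Real.exp (-(2⁻¹:ℝ) * x ^ 2)) := rfl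
  rw [GI, GI] at *
  linarith

lemma gaussianPDFReal_zero_one (x : ℝ) :
    gaussianPDFReal 0 1 x = (Real.sqrt (2 * π))⁻¹ * Real.exp (-(2⁻¹:ℝ) * x ^ 2) := by
  unfold gaussianPDFReal
  push_cast
  rw [mul_one, sub_zero]
  congr 1
  ring

lemma integral_gaussianReal_eq (g : ℝ → ℝ) :
    ∫ x, g x ∂(gaussianReal 0 1) = ∫ x : ℝ, gaussianPDFReal 0 1 x * g x := by
  rw [gaussianReal_of_var_ne_zero 0 one_ne_zero]
  have h : gaussianPDF 0 1 = fun x => ((gaussianPDFReal 0 1 x).toNNReal : ℝ≥0∞) := rfl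
  rw [h, integral_withDensity_eq_integral_smul
    (measurable_gaussianPDFReal 0 1).real_toNNReal g]
  congr 1
  funext x
  simp [NNReal.smul_def, Real.coe_toNNReal _ (gaussianPDFReal_nonneg 0 1 x)]

lemma gauss_moment (n : ℕ) :
    ∫ x, x ^ n ∂(gaussianReal 0 1) = (Real.sqrt (2 * π))⁻¹ * GI n := by
  rw [integral_gaussianReal_eq (fun x => x ^ n), GI, ← integral_const_mul]
  congr 1
  funext x
  rw [gaussianPDFReal_zero_one]
  ring

lemma sqrt_two_pi_pos : (0:ℝ) < Real.sqrt (2 * π) :=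
  Real.sqrt_pos.2 (by positivity)

lemma gauss_moment_vals :
    (∫ x, x ^ 0 ∂(gaussianReal 0 1)) = 1 ∧
    (∫ x, x ^ 1 ∂(gaussianReal 0 1)) = 0 ∧
    (∫ x, x ^ 2 ∂(gaussianReal 0 1)) = 1 ∧
    (∫ x, x ^ 3 ∂(gaussianReal 0 1)) = 0 ∧
    (∫ x, x ^ 4 ∂(gaussianReal 0 1)) = 3 := by
  have h2 : GI 2 = Real.sqrt (2*π) := by
    have := GI_rec 0; rw [GI_zero] at this; simpa using this
  have h3 : GI 3 = 0 := by
    have := GI_rec 1; rw [GI_one] at this; simpa using this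
  have h4 : GI 4 = 3 * Real.sqrt (2*π) := by
    have := GI_rec 2; rw [h2] at this; push_cast at this; linarith
  have hs := sqrt_two_pi_pos
  refine ⟨?_, ?_, ?_, ?_, ?_⟩ <;>
    rw [gauss_moment] <;>
    simp [GI_zero, GI_one, h2, h3, h4] <;>
    field_simp <;>
    try ring

lemma gauss_pow_integrable (n : ℕ) :
    Integrable (fun x : ℝ => x ^ n) (gaussianReal 0 1) := by
  rw [gaussianReal_of_var_ne_zero 0 one_ne_zero]
  have h : gaussianPDF 0 1 = fun x => ((gaussianPDFReal 0 1 x).toNNReal : ℝ≥0∞) := rfl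
  rw [h]
  apply (integrable_withDensity_iff_integrable_smul
    (measurable_gaussianPDFReal 0 1).real_toNNReal).2
  apply ((gauss_intg n).const_mul ((Real.sqrt (2*π))⁻¹)).congr
  filter_upwards with x
  rw [NNReal.smul_def, Real.coe_toNNReal _ (gaussianPDFReal_nonneg 0 1 x),
    smul_eq_mul, gaussianPDFReal_zero_one]
  ring

lemma pi_int {d : ℕ} (f : Fin d → ℝ → ℝ) :
    ∫ a : Fin d → ℝ, ∏ i, f i (a i) ∂(Measure.pi fun _ => gaussianReal 0 1)
      = ∏ i, ∫ x, f i x ∂(gaussianReal 0 1) := by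
  letI : MeasureSpace ℝ := ⟨gaussianReal 0 1⟩
  haveI : SigmaFinite (volume : Measure ℝ) :=
    inferInstanceAs (SigmaFinite (gaussianReal 0 1))
  exact integral_fintype_prod_eq_prod f

lemma pi_intg {d : ℕ} (f : Fin d → ℝ → ℝ) (hf : ∀ i, Integrable (f i) (gaussianReal 0 1)) :
    Integrable (fun a : Fin d → ℝ => ∏ i, f i (a i)) (Measure.pi fun _ => gaussianReal 0 1) := by
  letI : MeasureSpace ℝ := ⟨gaussianReal 0 1⟩
  haveI : SigmaFinite (volume : Measure ℝ) :=
    inferInstanceAs (SigmaFinite (gaussianReal 0 1))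
  exact Integrable.fintype_prod hf

def E4 {d : ℕ} (i j k l : Fin d) : ℝ :=
  (if i = j then 1 else 0) * (if k = l then 1 else 0)
  + (if i = k then 1 else 0) * (if j = l then 1 else 0)
  + (if i = l then 1 else 0) * (if j = k then 1 else 0)

lemma wick {d : ℕ} (M : ℕ → ℝ) (h0 : M 0 = 1) (h1 : M 1 = 0) (h2 : M 2 = 1)
    (h3 : M 3 = 0) (h4 : M 4 = 3) (i j k l : Fin d) :
    (∏ m, M ((if i = m then 1 else 0) + (if j = m then 1 else 0)
      + (if k = m then 1 else 0) + (if l = m then 1 else 0))) = E4 i j k l := by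
  by_cases hij : i = j
  · subst hij
    by_cases hik : i = k
    · subst hik
      by_cases hil : i = l
      · subst hil
        rw [Finset.prod_eq_single i (fun b _ hb => by simp [Ne.symm hb, h0])
          (fun h => absurd (Finset.mem_univ i) h)]
        simp [E4, h4] <;> norm_num
      · rw [Finset.prod_eq_zero (Finset.mem_univ l) (by simp [hil, h1])]
        simp [E4, hil]
    · by_cases hkl : k = l
      · subst hkl
        rw [Finset.prod_eq_one (fun m _ => ?_)]
        · simp [E4, hik]
        · by_cases him : i = m
          · subst him
            simp [Ne.symm hik, h2] <;> norm_num
          · by_cases hkm : k = m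
            · subst hkm
              simp [him, h2] <;> norm_num
            · simp [him, hkm, h0]
      · by_cases hil : i = l
        · subst hil
          rw [Finset.prod_eq_zero (Finset.mem_univ k)
            (by simp [hik, hkl, Ne.symm hkl, h1])]
          simp [E4, hik, hkl]
        · rw [Finset.prod_eq_zero (Finset.mem_univ k)
            (by simp [hik, Ne.symm hkl, h1])]
          simp [E4, hik, hil, hkl]
  · by_cases hkl : k = l
    · subst hkl
      by_cases hik : i = k
      · subst hik
        rw [Finset.prod_eq_zero (Finset.mem_univ i)
          (by simp [Ne.symm hij, h3] <;> norm_num)]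
        simp [E4, hij, Ne.symm hij]
      · rw [Finset.prod_eq_zero (Finset.mem_univ i)
          (by simp [Ne.symm hij, Ne.symm hik, h1])]
        simp [E4, hij, hik]
    · by_cases hik : i = k
      · subst hik
        by_cases hjl : j = l
        · subst hjl
          rw [Finset.prod_eq_one (fun m _ => ?_)]
          · simp [E4, hij] <;> norm_num
          · by_cases him : i = m
            · subst him
              simp [Ne.symm hij, h2] <;> norm_num
            · by_cases hjm : j = m
              · subst hjm
                simp [him, h2] <;> norm_num
              · simp [him, hjm, h0]
        · rw [Finset.prod_eq_zero (Finset.mem_univ j)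
            (by simp [hij, Ne.symm hjl, h1])]
          simp [E4, hij, hjl, Ne.symm hij]
      · by_cases hil : i = l
        · subst hil
          by_cases hjk : j = k
          · subst hjk
            rw [Finset.prod_eq_one (fun m _ => ?_)]
            · simp [E4, hij, hik] <;> norm_num
            · by_cases him : i = m
              · subst him
                simp [Ne.symm hij, h2] <;> norm_num
              · by_cases hjm : j = m
                · subst hjm
                  simp [him, h2] <;> norm_num
                · simp [him, hjm, h0]
          · rw [Finset.prod_eq_zero (Finset.mem_univ j)
              (by simp [hij, Ne.symm hjk, h1])]
            simp [E4, hij, hik, hjk]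
        · rw [Finset.prod_eq_zero (Finset.mem_univ i)
            (by simp [Ne.symm hij, Ne.symm hik, Ne.symm hil, h1])]
          simp [E4, hij, hik, hil]

lemma collapse1 {d : ℕ} (p q : Fin d → ℝ) :
    ∑ i, ∑ j, p i * q j * (if i = j then (1:ℝ) else 0) = ∑ i, p i * q i := by
  refine Finset.sum_congr rfl fun i _ => ?_
  simp [mul_ite, Finset.sum_ite_eq]

lemma collapse2 {d : ℕ} (f g : Fin d → Fin d → ℝ) :
    ∑ i, ∑ j, ∑ k, ∑ l, f i j * g k l = (∑ i, ∑ j, f i j) * (∑ k, ∑ l, g k l) := by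
  rw [Finset.sum_mul_sum]
  refine Finset.sum_congr rfl fun i _ => ?_
  rw [Finset.sum_comm]
  refine Finset.sum_congr rfl fun k _ => ?_
  rw [Finset.sum_mul_sum]

lemma collapseA {d : ℕ} (p q r s : Fin d → ℝ) :
    ∑ i, ∑ j, ∑ k, ∑ l, p i * q j * r k * s l
        * ((if i = j then (1:ℝ) else 0) * (if k = l then 1 else 0))
      = (∑ i, p i * q i) * (∑ k, r k * s k) := by
  rw [← collapse1 p q, ← collapse1 r s, ← collapse2]
  refine Finset.sum_congr rfl fun i _ => Finset.sum_congr rfl fun j _ =>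
    Finset.sum_congr rfl fun k _ => Finset.sum_congr rfl fun l _ => by ring

lemma sum_E4 {d : ℕ} (u v w x : Fin d → ℝ) :
    ∑ i, ∑ j, ∑ k, ∑ l, u i * v j * w k * x l * E4 i j k l
      = (∑ i, u i * v i) * (∑ i, w i * x i) + (∑ i, u i * w i) * (∑ i, v i * x i)
        + (∑ i, u i * x i) * (∑ i, v i * w i) := by
  have hB : (∑ i, ∑ j, ∑ k, ∑ l, u i * v j * w k * x l
        * ((if i = k then (1:ℝ) else 0) * (if j = l then 1 else 0)))
      = (∑ i, u i * w i) * (∑ i, v i * x i) := by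
    have swap : (∑ i, ∑ j, ∑ k, ∑ l, u i * v j * w k * x l
          * ((if i = k then (1:ℝ) else 0) * (if j = l then 1 else 0)))
        = ∑ i, ∑ k, ∑ j, ∑ l, u i * v j * w k * x l
          * ((if i = k then (1:ℝ) else 0) * (if j = l then 1 else 0)) :=
      Finset.sum_congr rfl fun i _ => Finset.sum_comm
    rw [swap, ← collapseA u w v x]
    refine Finset.sum_congr rfl fun i _ => Finset.sum_congr rfl fun k _ =>
      Finset.sum_congr rfl fun j _ => Finset.sum_congr rfl fun l _ => by ring
  have hC : (∑ i, ∑ j, ∑ k, ∑ l, u i * v j * w k * x l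
        * ((if i = l then (1:ℝ) else 0) * (if j = k then 1 else 0)))
      = (∑ i, u i * x i) * (∑ i, v i * w i) := by
    have swap1 : (∑ i, ∑ j, ∑ k, ∑ l, u i * v j * w k * x l
          * ((if i = l then (1:ℝ) else 0) * (if j = k then 1 else 0)))
        = ∑ i, ∑ l, ∑ j, ∑ k, u i * v j * w k * x l
          * ((if i = l then (1:ℝ) else 0) * (if j = k then 1 else 0)) := by
      refine Finset.sum_congr rfl fun i _ => ?_
      rw [show (∑ j, ∑ k, ∑ l, u i * v j * w k * x l
          * ((if i = l then (1:ℝ) else 0) * (if j = k then 1 else 0)))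
        = ∑ j, ∑ l, ∑ k, u i * v j * w k * x l
          * ((if i = l then (1:ℝ) else 0) * (if j = k then 1 else 0)) from
        Finset.sum_congr rfl fun j _ => Finset.sum_comm]
      exact Finset.sum_comm
    rw [swap1, ← collapseA u x v w]
    refine Finset.sum_congr rfl fun i _ => Finset.sum_congr rfl fun l _ =>
      Finset.sum_congr rfl fun j _ => Finset.sum_congr rfl fun k _ => by ring
  have h1 : ∑ i, ∑ j, ∑ k, ∑ l, u i * v j * w k * x l * E4 i j k l
      = ∑ i, ∑ j, ∑ k, ∑ l, (u i * v j * w k * x l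
          * ((if i = j then (1:ℝ) else 0) * (if k = l then 1 else 0))
        + (u i * v j * w k * x l
          * ((if i = k then (1:ℝ) else 0) * (if j = l then 1 else 0))
        + u i * v j * w k * x l
          * ((if i = l then (1:ℝ) else 0) * (if j = k then 1 else 0)))) := by
    refine Finset.sum_congr rfl fun i _ => Finset.sum_congr rfl fun j _ =>
      Finset.sum_congr rfl fun k _ => Finset.sum_congr rfl fun l _ => ?_
    simp only [E4]
    ring
  rw [h1]
  simp only [Finset.sum_add_distrib]
  rw [collapseA u v w x, hB, hC]
  ring

lemma monomial_repr {d : ℕ} (i j k l : Fin d) (a : Fin d → ℝ) :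
    a i * a j * a k * a l = ∏ m, (a m) ^ ((if i = m then 1 else 0) + (if j = m then 1 else 0)
      + (if k = m then 1 else 0) + (if l = m then 1 else 0)) := by
  simp only [pow_add, Finset.prod_mul_distrib]
  have e : ∀ p : Fin d, (∏ m, (a m) ^ (if p = m then 1 else 0)) = a p := by
    intro p
    calc (∏ m, (a m) ^ (if p = m then 1 else 0))
        = ∏ m, (if p = m then a m else 1) :=
          Finset.prod_congr rfl fun m _ => by split <;> simp
      _ = a p := by simp
  rw [e i, e j, e k, e l]

lemma integrable_monomial {d : ℕ} (i j k l : Fin d) :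
    Integrable (fun a : Fin d → ℝ => a i * a j * a k * a l)
      (Measure.pi fun _ : Fin d => gaussianReal 0 1) := by
  rw [show (fun a : Fin d → ℝ => a i * a j * a k * a l)
      = fun a => ∏ m, (a m) ^ ((if i = m then 1 else 0) + (if j = m then 1 else 0)
        + (if k = m then 1 else 0) + (if l = m then 1 else 0)) from
    funext (monomial_repr i j k l)]
  exact pi_intg _ fun m => gauss_pow_integrable _

lemma integral_monomial {d : ℕ} (i j k l : Fin d) :
    ∫ a : Fin d → ℝ, a i * a j * a k * a l ∂(Measure.pi fun _ : Fin d => gaussianReal 0 1)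
      = E4 i j k l := by
  rw [show (fun a : Fin d → ℝ => a i * a j * a k * a l)
      = fun a => ∏ m, (a m) ^ ((if i = m then 1 else 0) + (if j = m then 1 else 0)
        + (if k = m then 1 else 0) + (if l = m then 1 else 0)) from
    funext (monomial_repr i j k l)]
  rw [pi_int (fun m x => x ^ ((if i = m then 1 else 0) + (if j = m then 1 else 0)
        + (if k = m then 1 else 0) + (if l = m then 1 else 0)))]
  obtain ⟨m0, m1, m2, m3, m4⟩ := gauss_moment_vals
  exact wick (fun n => ∫ x, x ^ n ∂(gaussianReal 0 1)) m0 m1 m2 m3 m4 i j k l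

lemma quad_repr {d : ℕ} (u v w x : Fin d → ℝ) :
    (fun a : Fin d → ℝ => (∑ i, a i * u i) * (∑ i, a i * v i) * (∑ i, a i * w i)
        * (∑ i, a i * x i))
      = fun a => ∑ i, ∑ j, ∑ k, ∑ l, x i * w j * v k * u l * (a i * a j * a k * a l) := by
  funext a
  simp only [Finset.sum_mul, Finset.mul_sum]
  refine Finset.sum_congr rfl fun i _ => Finset.sum_congr rfl fun j _ =>
    Finset.sum_congr rfl fun k _ => Finset.sum_congr rfl fun l _ => by ring

lemma quad_integrable {d : ℕ} (u v w x : Fin d → ℝ) :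
    Integrable (fun a : Fin d → ℝ => (∑ i, a i * u i) * (∑ i, a i * v i) * (∑ i, a i * w i)
        * (∑ i, a i * x i)) (Measure.pi fun _ : Fin d => gaussianReal 0 1) := by
  rw [quad_repr]
  refine integrable_finset_sum _ fun i _ => integrable_finset_sum _ fun j _ =>
    integrable_finset_sum _ fun k _ => integrable_finset_sum _ fun l _ => ?_
  exact (integrable_monomial i j k l).const_mul _

lemma quad {d : ℕ} (u v w x : Fin d → ℝ) :
    ∫ a : Fin d → ℝ, (∑ i, a i * u i) * (∑ i, a i * v i) * (∑ i, a i * w i)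
        * (∑ i, a i * x i) ∂(Measure.pi fun _ : Fin d => gaussianReal 0 1)
      = (∑ i, x i * w i) * (∑ i, v i * u i) + (∑ i, x i * v i) * (∑ i, w i * u i)
        + (∑ i, x i * u i) * (∑ i, w i * v i) := by
  set μd := Measure.pi fun _ : Fin d => gaussianReal 0 1 with hμd
  rw [quad_repr]
  have h4 : ∀ i j k l : Fin d, Integrable
      (fun a : Fin d → ℝ => x i * w j * v k * u l * (a i * a j * a k * a l)) μd :=
    fun i j k l => (integrable_monomial i j k l).const_mul _
  calc ∫ a : Fin d → ℝ, ∑ i, ∑ j, ∑ k, ∑ l, x i * w j * v k * u l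
          * (a i * a j * a k * a l) ∂μd
      = ∑ i, ∫ a : Fin d → ℝ, ∑ j, ∑ k, ∑ l, x i * w j * v k * u l
          * (a i * a j * a k * a l) ∂μd :=
        integral_finset_sum _ fun i _ => integrable_finset_sum _ fun j _ =>
          integrable_finset_sum _ fun k _ => integrable_finset_sum _ fun l _ => h4 i j k l
    _ = ∑ i, ∑ j, ∫ a : Fin d → ℝ, ∑ k, ∑ l, x i * w j * v k * u l
          * (a i * a j * a k * a l) ∂μd :=
        Finset.sum_congr rfl fun i _ => integral_finset_sum _ fun j _ =>
          integrable_finset_sum _ fun k _ => integrable_finset_sum _ fun l _ => h4 i j k l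
    _ = ∑ i, ∑ j, ∑ k, ∫ a : Fin d → ℝ, ∑ l, x i * w j * v k * u l
          * (a i * a j * a k * a l) ∂μd :=
        Finset.sum_congr rfl fun i _ => Finset.sum_congr rfl fun j _ =>
          integral_finset_sum _ fun k _ => integrable_finset_sum _ fun l _ => h4 i j k l
    _ = ∑ i, ∑ j, ∑ k, ∑ l, ∫ a : Fin d → ℝ, x i * w j * v k * u l
          * (a i * a j * a k * a l) ∂μd :=
        Finset.sum_congr rfl fun i _ => Finset.sum_congr rfl fun j _ =>
          Finset.sum_congr rfl fun k _ => integral_finset_sum _ fun l _ => h4 i j k l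
    _ = ∑ i, ∑ j, ∑ k, ∑ l, x i * w j * v k * u l * E4 i j k l :=
        Finset.sum_congr rfl fun i _ => Finset.sum_congr rfl fun j _ =>
          Finset.sum_congr rfl fun k _ => Finset.sum_congr rfl fun l _ => by
            rw [integral_const_mul, integral_monomial]
    _ = (∑ i, x i * w i) * (∑ i, v i * u i) + (∑ i, x i * v i) * (∑ i, w i * u i)
        + (∑ i, x i * u i) * (∑ i, w i * v i) := sum_E4 x w v u

/-- Closed form of the phase-retrieval population loss under the standard Gaussian
measure on `ℝ^d`, together with its specialization to a unit ground-truth vector. -/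
theorem gaussian_phase_retrieval_loss (d : ℕ) (hd : 0 < d) (u v : Fin d → ℝ) :
    (∫ a : Fin d → ℝ, ((∑ i, a i * u i) ^ 2 - (∑ i, a i * v i) ^ 2) ^ 2
        ∂(Measure.pi fun _ : Fin d => gaussianReal 0 1)) =
      3 * (∑ i, u i ^ 2) ^ 2 + 3 * (∑ i, v i ^ 2) ^ 2
        - 2 * (∑ i, u i ^ 2) * (∑ i, v i ^ 2) - 4 * (∑ i, u i * v i) ^ 2 ∧
    ((∑ i, v i ^ 2) = 1 →
      (∫ a : Fin d → ℝ, ((∑ i, a i * u i) ^ 2 - (∑ i, a i * v i) ^ 2) ^ 2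
          ∂(Measure.pi fun _ : Fin d => gaussianReal 0 1)) =
        4 * ((∑ i, u i ^ 2) - (∑ i, u i * v i) ^ 2)
          + 3 * ((∑ i, u i ^ 2) - 1) ^ 2) := by
  have hfun : (fun a : Fin d → ℝ => ((∑ i, a i * u i) ^ 2 - (∑ i, a i * v i) ^ 2) ^ 2)
      = fun a => ((∑ i, a i * u i) * (∑ i, a i * u i) * (∑ i, a i * u i) * (∑ i, a i * u i)
          - (∑ i, a i * u i) * (∑ i, a i * u i) * (∑ i, a i * v i) * (∑ i, a i * v i))
        - ((∑ i, a i * u i) * (∑ i, a i * u i) * (∑ i, a i * v i) * (∑ i, a i * v i)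
          - (∑ i, a i * v i) * (∑ i, a i * v i) * (∑ i, a i * v i) * (∑ i, a i * v i)) :=
    funext fun a => by ring
  have h1 := quad_integrable u u u u
  have h2 := quad_integrable u u v v
  have h3 := quad_integrable v v v v
  have euu : ∑ i, u i * u i = ∑ i, u i ^ 2 :=
    Finset.sum_congr rfl fun i _ => (sq (u i)).symm
  have evv : ∑ i, v i * v i = ∑ i, v i ^ 2 :=
    Finset.sum_congr rfl fun i _ => (sq (v i)).symm
  have evu : ∑ i, v i * u i = ∑ i, u i * v i :=
    Finset.sum_congr rfl fun i _ => mul_comm _ _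
  have main1 : (∫ a : Fin d → ℝ, ((∑ i, a i * u i) ^ 2 - (∑ i, a i * v i) ^ 2) ^ 2
        ∂(Measure.pi fun _ : Fin d => gaussianReal 0 1)) =
      3 * (∑ i, u i ^ 2) ^ 2 + 3 * (∑ i, v i ^ 2) ^ 2
        - 2 * (∑ i, u i ^ 2) * (∑ i, v i ^ 2) - 4 * (∑ i, u i * v i) ^ 2 := by
    have s2 : (∫ a : Fin d → ℝ, ((∑ i, a i * u i) * (∑ i, a i * u i) * (∑ i, a i * u i) * (∑ i, a i * u i) - (∑ i, a i * u i) * (∑ i, a i * u i) * (∑ i, a i * v i) * (∑ i, a i * v i)) ∂(Measure.pi fun _ : Fin d => gaussianReal 0 1))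
        = (∫ a : Fin d → ℝ, (∑ i, a i * u i) * (∑ i, a i * u i) * (∑ i, a i * u i) * (∑ i, a i * u i) ∂(Measure.pi fun _ : Fin d => gaussianReal 0 1)) - (∫ a : Fin d → ℝ, (∑ i, a i * u i) * (∑ i, a i * u i) * (∑ i, a i * v i) * (∑ i, a i * v i) ∂(Measure.pi fun _ : Fin d => gaussianReal 0 1)) :=
      integral_sub h1 h2
    have s3 : (∫ a : Fin d → ℝ, ((∑ i, a i * u i) * (∑ i, a i * u i) * (∑ i, a i * v i) * (∑ i, a i * v i) - (∑ i, a i * v i) * (∑ i, a i * v i) * (∑ i, a i * v i) * (∑ i, a i * v i)) ∂(Measure.pi fun _ : Fin d => gaussianReal 0 1))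
        = (∫ a : Fin d → ℝ, (∑ i, a i * u i) * (∑ i, a i * u i) * (∑ i, a i * v i) * (∑ i, a i * v i) ∂(Measure.pi fun _ : Fin d => gaussianReal 0 1)) - (∫ a : Fin d → ℝ, (∑ i, a i * v i) * (∑ i, a i * v i) * (∑ i, a i * v i) * (∑ i, a i * v i) ∂(Measure.pi fun _ : Fin d => gaussianReal 0 1)) :=
      integral_sub h2 h3
    have s1 : (∫ a : Fin d → ℝ, (((∑ i, a i * u i) * (∑ i, a i * u i) * (∑ i, a i * u i) * (∑ i, a i * u i) - (∑ i, a i * u i) * (∑ i, a i * u i) * (∑ i, a i * v i) * (∑ i, a i * v i)) - ((∑ i, a i * u i) * (∑ i, a i * u i) * (∑ i, a i * v i) * (∑ i, a i * v i) - (∑ i, a i * v i) * (∑ i, a i * v i) * (∑ i, a i * v i) * (∑ i, a i * v i))) ∂(Measure.pi fun _ : Fin d => gaussianReal 0 1))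
        = (∫ a : Fin d → ℝ, ((∑ i, a i * u i) * (∑ i, a i * u i) * (∑ i, a i * u i) * (∑ i, a i * u i) - (∑ i, a i * u i) * (∑ i, a i * u i) * (∑ i, a i * v i) * (∑ i, a i * v i)) ∂(Measure.pi fun _ : Fin d => gaussianReal 0 1))
          - (∫ a : Fin d → ℝ, ((∑ i, a i * u i) * (∑ i, a i * u i) * (∑ i, a i * v i) * (∑ i, a i * v i) - (∑ i, a i * v i) * (∑ i, a i * v i) * (∑ i, a i * v i) * (∑ i, a i * v i)) ∂(Measure.pi fun _ : Fin d => gaussianReal 0 1)) :=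
      integral_sub (h1.sub h2) (h2.sub h3)
    rw [hfun, s1, s2, s3, quad u u u u, quad u u v v, quad v v v v]
    rw [euu, evv, evu]
    ring
  refine ⟨main1, fun hv => ?_⟩
  rw [main1, hv]
  ring
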